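/- Let Σ be the free monoid on an alphabet W and let w ∈ Σ be a nonempty word. The w-norm is subadditive: for any two words g_1, g_2 ∈ Σ, |g_1 g_2|_w ≤ |g_1|_w + |g_2|_w. -/

import Mathlib

namespace Stmt9

/-- `Iw w v` is the number of occurrences of `w` as a contiguous subword of `v`, counted by
starting position: the number of prefixes `v'` of `v` such that `v = v' * w * v''` for some
word `v''`. -/
def Iw {W : Type*} [DecidableEq W] (w v : FreeMonoid W) : ℕ :=
  ((List.range ((FreeMonoid.toList v).length + 1)).filter
    (fun i => FreeMonoid.toList w <+: (FreeMonoid.toList v).drop i)).length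

/-- The `w`-norm of a word: `|v|_w = I_w(v) + |w|`. -/
def wnorm {W : Type*} [DecidableEq W] (w v : FreeMonoid W) : ℕ :=
  Iw w v + FreeMonoid.length w

lemma list_filter_range_card {n : ℕ} (p : ℕ → Prop) [DecidablePred p] :
    ((List.range n).filter (fun i => p i)).length = ((Finset.range n).filter p).card := by
  rfl

lemma key {W : Type*} [DecidableEq W] (a b ww : List W) :
    ((List.range ((a ++ b).length + 1)).filter (fun i => ww <+: (a ++ b).drop i)).length ≤
      ((List.range (a.length + 1)).filter (fun i => ww <+: a.drop i)).length +
      ((List.range (b.length + 1)).filter (fun i => ww <+: b.drop i)).length + ww.length := by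
  classical
  set m := ww.length with hm
  rw [list_filter_range_card, list_filter_range_card, list_filter_range_card]
  set S := (Finset.range ((a ++ b).length + 1)).filter (fun i => ww <+: (a ++ b).drop i)
  set A := (Finset.range (a.length + 1)).filter (fun i => ww <+: a.drop i)
  set B := (Finset.range (b.length + 1)).filter (fun i => ww <+: b.drop i)
  set C := Finset.Ico (a.length + 1 - m) a.length
  have hsub : S ⊆ A ∪ C ∪ B.image (· + a.length) := by
    intro i hi
    simp only [S, Finset.mem_filter, Finset.mem_range] at hi
    obtain ⟨hilt, hpre⟩ := hi
    rw [List.length_append] at hilt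
    by_cases h1 : i + m ≤ a.length
    · apply Finset.mem_union_left; apply Finset.mem_union_left
      simp only [A, Finset.mem_filter, Finset.mem_range]
      constructor
      · omega
      · rw [List.drop_append_of_le_length (by omega)] at hpre
        have := List.prefix_iff_eq_take.mp hpre
        rw [List.take_append_of_le_length (by simp; omega)] at this
        rw [this]
        exact List.take_prefix _ _
    · by_cases h2 : a.length ≤ i
      · apply Finset.mem_union_right
        refine Finset.mem_image.mpr ⟨i - a.length, ?_, by omega⟩
        simp only [B, Finset.mem_filter, Finset.mem_range]
        constructor
        · omega
        · have : i = a.length + (i - a.length) := by omega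
          rw [this, List.drop_length_add_append] at hpre
          exact hpre
      · apply Finset.mem_union_left; apply Finset.mem_union_right
        simp only [C, Finset.mem_Ico]
        omega
  calc S.card ≤ (A ∪ C ∪ B.image (· + a.length)).card := Finset.card_le_card hsub
    _ ≤ (A ∪ C).card + (B.image (· + a.length)).card := Finset.card_union_le _ _
    _ ≤ A.card + C.card + (B.image (· + a.length)).card := by
        exact Nat.add_le_add_right (Finset.card_union_le _ _) _
    _ ≤ A.card + m + B.card := by
        have h1 : C.card ≤ m := by
          simp only [C, Nat.card_Ico]; omega
        have h2 : (B.image (· + a.length)).card ≤ B.card := Finset.card_image_le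
        omega
    _ ≤ A.card + B.card + m := by omega

/-- For a nonempty word `w` in the free monoid on an alphabet `W`, the `w`-norm is subadditive:
`|g₁g₂|_w ≤ |g₁|_w + |g₂|_w`. -/
theorem wnorm_mul_le {W : Type*} [DecidableEq W] (w : FreeMonoid W) (hw : w ≠ 1)
    (g₁ g₂ : FreeMonoid W) :
    wnorm w (g₁ * g₂) ≤ wnorm w g₁ + wnorm w g₂ := by
  unfold wnorm Iw
  have h := key (FreeMonoid.toList g₁) (FreeMonoid.toList g₂) (FreeMonoid.toList w)
  have hmul : FreeMonoid.toList (g₁ * g₂) = FreeMonoid.toList g₁ ++ FreeMonoid.toList g₂ := rfl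
  have hlen : FreeMonoid.length w = (FreeMonoid.toList w).length := rfl
  rw [hmul, hlen]
  omega

end Stmt9
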